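/- Poincaré lemma for closed 1-forms on simply connected open sets (the step 'since M₁ is simply connected and dX♭ = 0, there is φ with X = ∇φ'): Let n ≥ 1, let U ⊆ ℝⁿ be open and simply connected, and let ω : ℝⁿ → (ℝⁿ →L[ℝ] ℂ) be a continuously differentiable (C¹ on U) ℂ-valued 1-form that is closed on U, in the sense that for every x ∈ U and all vectors v, w ∈ ℝⁿ one has (Dω(x)[v])(w) = (Dω(x)[w])(v). Then there exists a function φ : ℝⁿ → ℂ that is differentiable at every point of U with Dφ(x) = ω(x) for all x ∈ U. -/

import Mathlib

open Metric Set MeasureTheory intervalIntegral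

variable {E : Type*} [NormedAddCommGroup E] [NormedSpace ℝ E]

/-- Two primitives of `ω` on a convex set differ by a constant. -/
lemma const_diff {ω : E → E →L[ℝ] ℂ} {s : Set E} (hs : Convex ℝ s)
    {φ ψ : E → ℂ}
    (hφ : ∀ y ∈ s, HasFDerivAt φ (ω y) y) (hψ : ∀ y ∈ s, HasFDerivAt ψ (ω y) y)
    {x y : E} (hx : x ∈ s) (hy : y ∈ s) :
    φ y - ψ y = φ x - ψ x := by
  have h : ∀ z ∈ s, HasFDerivWithinAt (fun w => φ w - ψ w) ((0 : E →L[ℝ] ℂ)) s z := by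
    intro z hz
    have h' := ((hφ z hz).sub (hψ z hz)).hasFDerivWithinAt (s := s)
    rw [sub_self] at h'
    exact h'
  have hb := Convex.norm_image_sub_le_of_norm_hasFDerivWithin_le (C := 0) h
    (fun z _ => by simp) hs hx hy
  have h0 : ‖(φ y - ψ y) - (φ x - ψ x)‖ ≤ 0 := by simpa using hb
  have := norm_le_zero_iff.mp h0
  exact sub_eq_zero.mp this

/-- Local Poincaré lemma: a closed C¹ 1-form has a primitive on any ball contained in `U`. -/
lemma local_primitive [ProperSpace E] {U : Set E} (hU : IsOpen U)
    {ω : E → E →L[ℝ] ℂ} (hω : ContDiffOn ℝ 1 ω U)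
    (hclosed : ∀ x ∈ U, ∀ v w : E, (fderiv ℝ ω x v) w = (fderiv ℝ ω x w) v)
    {a : E} {r : ℝ} (hbU : ball a r ⊆ U) :
    ∃ φ : E → ℂ, ∀ y ∈ ball a r, HasFDerivAt φ (ω y) y := by
  have hωc : ContinuousOn ω U := hω.continuousOn
  have hDc : ContinuousOn (fderiv ℝ ω) U := hω.continuousOn_fderiv_of_isOpen hU le_rfl
  have hdωat : ∀ y ∈ U, HasFDerivAt ω (fderiv ℝ ω y) y := fun y hy =>
    ((hω.differentiableOn one_ne_zero).differentiableAt (hU.mem_nhds hy)).hasFDerivAt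
  refine ⟨fun x => ∫ t in (0:ℝ)..1, ω (a + t • (x - a)) (x - a), ?_⟩
  intro x hx
  have hxa : dist x a < r := mem_ball.mp hx
  set ε : ℝ := (r - dist x a) / 2 with hε_def
  have hε : 0 < ε := by
    have := dist_nonneg (x := x) (y := a); simp only [hε_def]; linarith
  set R : ℝ := dist x a + ε with hR_def
  have hRr : R < r := by simp only [hR_def, hε_def]; linarith
  have hR0 : 0 ≤ R := by positivity
  set K : Set E := closedBall a R with hK_def
  have hKU : K ⊆ U := (closedBall_subset_ball hRr).trans hbU
  have hK : IsCompact K := isCompact_closedBall a R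
  -- membership of the segment points
  have memc : ∀ z ∈ closedBall x ε, ∀ t ∈ Icc (0:ℝ) 1, a + t • (z - a) ∈ K := by
    intro z hz t ht
    have hza : ‖z - a‖ ≤ R := by
      calc ‖z - a‖ = dist z a := (dist_eq_norm z a).symm
        _ ≤ dist z x + dist x a := dist_triangle z x a
        _ ≤ ε + dist x a := by linarith [mem_closedBall.mp hz]
        _ = R := by simp [hR_def]; ring
    have : dist (a + t • (z - a)) a = |t| * ‖z - a‖ := by
      rw [dist_eq_norm]; simp [norm_smul]
    rw [mem_closedBall, this, abs_of_nonneg ht.1]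
    calc t * ‖z - a‖ ≤ 1 * ‖z - a‖ := by
          apply mul_le_mul_of_nonneg_right ht.2 (norm_nonneg _)
      _ = ‖z - a‖ := one_mul _
      _ ≤ R := hza
  have hxK : ∀ t ∈ Icc (0:ℝ) 1, a + t • (x - a) ∈ K :=
    memc x (mem_closedBall_self hε.le) 
  -- bounds on K
  obtain ⟨C₁, hC₁⟩ := hK.exists_bound_of_continuousOn (hωc.mono hKU)
  obtain ⟨C₂, hC₂⟩ := hK.exists_bound_of_continuousOn (E := E →L[ℝ] E →L[ℝ] ℂ) (hDc.mono hKU)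
  have hC₂0 : 0 ≤ C₂ := le_trans (norm_nonneg _) (hC₂ a (by simp [hK_def, hR0]))
  have hC₁0 : 0 ≤ C₁ := le_trans (norm_nonneg _) (hC₁ a (by simp [hK_def, hR0]))
  -- the parametrized family and its derivative
  set F : E → ℝ → ℂ := fun z t => ω (a + t • (z - a)) (z - a) with hF_def
  set F' : E → ℝ → E →L[ℝ] ℂ := fun z t =>
    ω (a + t • (z - a)) + t • ((fderiv ℝ ω (a + t • (z - a))) (z - a)) with hF'_def
  -- continuity of the curve
  have hcurve : ∀ z : E, Continuous fun t : ℝ => a + t • (z - a) := fun z =>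
    continuous_const.add (continuous_id.smul continuous_const)
  have hFcont : ∀ z ∈ closedBall x ε, ContinuousOn (F z) (Icc (0:ℝ) 1) := by
    intro z hz
    have h1 : ContinuousOn (fun t : ℝ => ω (a + t • (z - a))) (Icc (0:ℝ) 1) :=
      hωc.comp (hcurve z).continuousOn (fun t ht => hKU (memc z hz t ht))
    exact h1.clm_apply continuousOn_const
  have hF'cont : ∀ z ∈ closedBall x ε, ContinuousOn (F' z) (Icc (0:ℝ) 1) := by
    intro z hz
    have h1 : ContinuousOn (fun t : ℝ => ω (a + t • (z - a))) (Icc (0:ℝ) 1) :=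
      hωc.comp (hcurve z).continuousOn (fun t ht => hKU (memc z hz t ht))
    have h2 : ContinuousOn (fun t : ℝ => fderiv ℝ ω (a + t • (z - a))) (Icc (0:ℝ) 1) :=
      hDc.comp (hcurve z).continuousOn (fun t ht => hKU (memc z hz t ht))
    exact h1.add (continuousOn_id.smul (h2.clm_apply continuousOn_const))
  -- differentiability in z
  have h_diff : ∀ t ∈ Set.uIoc (0:ℝ) 1, ∀ z ∈ ball x ε, HasFDerivAt (fun w => F w t) (F' z t) z := by
    intro t ht z hz
    have ht' : t ∈ Icc (0:ℝ) 1 := by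
      rw [uIoc_of_le zero_le_one] at ht; exact ⟨ht.1.le, ht.2⟩
    have hcK : a + t • (z - a) ∈ K := memc z (ball_subset_closedBall hz) t ht'
    have hcU : a + t • (z - a) ∈ U := hKU hcK
    have hm : HasFDerivAt (fun w : E => a + t • (w - a))
        (t • ContinuousLinearMap.id ℝ E) z :=
      (((hasFDerivAt_id z).sub_const a).const_smul t).const_add a
    have hg : HasFDerivAt (fun w : E => ω (a + t • (w - a)))
        ((fderiv ℝ ω (a + t • (z - a))).comp (t • ContinuousLinearMap.id ℝ E)) z :=
      (hdωat _ hcU).comp z hm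
    have hu : HasFDerivAt (fun w : E => w - a) (ContinuousLinearMap.id ℝ E) z :=
      (hasFDerivAt_id z).sub_const a
    have h := hg.clm_apply hu
    have heq : (ω (a + t • (z - a))).comp (ContinuousLinearMap.id ℝ E)
        + ((fderiv ℝ ω (a + t • (z - a))).comp (t • ContinuousLinearMap.id ℝ E)).flip (z - a)
        = F' z t := by
      ext v
      simp only [hF'_def, ContinuousLinearMap.add_apply, ContinuousLinearMap.comp_apply,
        ContinuousLinearMap.coe_id', id_eq, ContinuousLinearMap.flip_apply,
        ContinuousLinearMap.smul_apply, ContinuousLinearMap.coe_smul', Pi.smul_apply,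
        _root_.map_smul, smul_eq_mul]
      rw [hclosed _ hcU v (z - a)]
    rw [heq] at h
    exact h
  -- the bound
  have h_bound : ∀ t ∈ Set.uIoc (0:ℝ) 1, ∀ z ∈ ball x ε, ‖F' z t‖ ≤ C₁ + C₂ * R := by
    intro t ht z hz
    have ht' : t ∈ Icc (0:ℝ) 1 := by
      rw [uIoc_of_le zero_le_one] at ht; exact ⟨ht.1.le, ht.2⟩
    have hcK : a + t • (z - a) ∈ K := memc z (ball_subset_closedBall hz) t ht'
    have hza : ‖z - a‖ ≤ R := by
      calc ‖z - a‖ = dist z a := (dist_eq_norm z a).symm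
        _ ≤ dist z x + dist x a := dist_triangle z x a
        _ ≤ ε + dist x a := by linarith [(mem_closedBall.mp (ball_subset_closedBall hz))]
        _ = R := by simp [hR_def]; ring
    have hsm : ‖t • ((fderiv ℝ ω (a + t • (z - a))) (z - a))‖
        = |t| * ‖(fderiv ℝ ω (a + t • (z - a))) (z - a)‖ :=
      norm_smul t ((fderiv ℝ ω (a + t • (z - a))) (z - a))
    calc ‖F' z t‖ ≤ ‖ω (a + t • (z - a))‖ + ‖t • ((fderiv ℝ ω (a + t • (z - a))) (z - a))‖ :=
          norm_add_le _ _
      _ ≤ C₁ + 1 * (C₂ * R) := by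
          apply add_le_add (hC₁ _ hcK)
          rw [hsm, abs_of_nonneg ht'.1]
          apply mul_le_mul ht'.2 ?_ (norm_nonneg _) zero_le_one
          calc ‖(fderiv ℝ ω (a + t • (z - a))) (z - a)‖
              ≤ ‖fderiv ℝ ω (a + t • (z - a))‖ * ‖z - a‖ :=
                ContinuousLinearMap.le_opNorm _ _
            _ ≤ C₂ * R := mul_le_mul (hC₂ _ hcK) hza (norm_nonneg _) hC₂0
      _ = C₁ + C₂ * R := by ring
  -- the six hypotheses for differentiation under the integral
  haveI : SecondCountableTopologyEither ℝ (E →L[ℝ] ℂ) := ⟨Or.inl inferInstance⟩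
  haveI : SecondCountableTopologyEither ℝ ℂ := ⟨Or.inl inferInstance⟩
  have h1 : ∀ᶠ z in nhds x, AEStronglyMeasurable (F z) (volume.restrict (Set.uIoc (0:ℝ) 1)) := by
    filter_upwards [Metric.ball_mem_nhds x hε] with z hz
    exact ((hFcont z (ball_subset_closedBall hz)).mono
      (by rw [uIoc_of_le zero_le_one]; exact Ioc_subset_Icc_self)).aestronglyMeasurable
      measurableSet_uIoc
  have h2 : IntervalIntegrable (F x) volume 0 1 := by
    apply ContinuousOn.intervalIntegrable
    rw [uIcc_of_le zero_le_one]
    exact hFcont x (mem_closedBall_self hε.le)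
  have h3 : AEStronglyMeasurable (F' x) (volume.restrict (Set.uIoc (0:ℝ) 1)) :=
    ((hF'cont x (mem_closedBall_self hε.le)).mono
      (by rw [uIoc_of_le zero_le_one]; exact Ioc_subset_Icc_self)).aestronglyMeasurable
      measurableSet_uIoc
  have h4 : ∀ᵐ t ∂(volume : Measure ℝ), t ∈ Set.uIoc (0:ℝ) 1 →
      ∀ z ∈ ball x ε, ‖F' z t‖ ≤ C₁ + C₂ * R := Filter.Eventually.of_forall h_bound
  have h5 : IntervalIntegrable (fun _ : ℝ => C₁ + C₂ * R) volume 0 1 := intervalIntegrable_const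
  have h6 : ∀ᵐ t ∂(volume : Measure ℝ), t ∈ Set.uIoc (0:ℝ) 1 →
      ∀ z ∈ ball x ε, HasFDerivAt (fun w => F w t) (F' z t) z := Filter.Eventually.of_forall h_diff
  have hmain := hasFDerivAt_integral_of_dominated_of_fderiv_le (Metric.ball_mem_nhds x hε) h1 h2 h3 h4 h5 h6
  -- compute the integral of F' x
  have hFTC : (∫ t in (0:ℝ)..1, F' x t) = ω x := by
    have hderiv : ∀ t ∈ uIcc (0:ℝ) 1,
        HasDerivAt (fun t : ℝ => t • ω (a + t • (x - a))) (F' x t) t := by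
      intro t ht
      rw [uIcc_of_le zero_le_one] at ht
      have hcU : a + t • (x - a) ∈ U := hKU (hxK t ht)
      have h1' : HasDerivAt (fun t : ℝ => a + t • (x - a)) ((1:ℝ) • (x - a)) t :=
        (((hasDerivAt_id t).smul_const (x - a)).const_add a)
      rw [one_smul] at h1'
      have h2' : HasDerivAt (fun t : ℝ => ω (a + t • (x - a)))
          ((fderiv ℝ ω (a + t • (x - a))) (x - a)) t :=
        (hdωat _ hcU).comp_hasDerivAt t h1'
      have h3' := (hasDerivAt_id t).smul h2'
      have heq2 : id t • (fderiv ℝ ω (a + t • (x - a))) (x - a) + (1:ℝ) • ω (a + t • (x - a))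
          = F' x t := by
        simp only [id_eq, one_smul, hF'_def]
        rw [add_comm]
      rw [← heq2]
      exact h3'
    have hint : IntervalIntegrable (F' x) volume 0 1 := by
      apply ContinuousOn.intervalIntegrable
      rw [uIcc_of_le zero_le_one]
      exact hF'cont x (mem_closedBall_self hε.le)
    rw [integral_eq_sub_of_hasDerivAt hderiv hint]
    show (1:ℝ) • ω (a + (1:ℝ) • (x - a)) - (0:ℝ) • ω (a + (0:ℝ) • (x - a)) = ω x
    have e1 : a + (1:ℝ) • (x - a) = x := by rw [one_smul]; abel
    rw [e1, one_smul]
    have e2 : (0:ℝ) • ω (a + (0:ℝ) • (x - a)) = 0 := by ext v; simp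
    rw [e2, _root_.sub_zero]
  rw [hFTC] at hmain
  exact hmain

section Chains

variable {E : Type*} [NormedAddCommGroup E] [NormedSpace ℝ E]

/-- A chain for the 1-form `ω` along a curve `γ` (parametrized on `[0,1]`): a subdivision of
`[0,1]` into `N` equal pieces, convex sets `s i` containing the pieces of the curve and
primitives `f i` of `ω` on `s i`. -/
def FormChain (ω : E → E →L[ℝ] ℂ) (γ : ℝ → E) (N : ℕ) (f : ℕ → E → ℂ) (s : ℕ → Set E) : Prop :=
  ∀ i < N, Convex ℝ (s i) ∧ (∀ y ∈ s i, HasFDerivAt (f i) (ω y) y) ∧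
    ∀ t : ℝ, (i : ℝ) / N ≤ t → t ≤ ((i : ℝ) + 1) / N → γ t ∈ s i

/-- The "integral of `ω` along `γ`" computed using a chain. -/
noncomputable def chainSum (γ : ℝ → E) (N : ℕ) (f : ℕ → E → ℂ) : ℂ :=
  ∑ i ∈ Finset.range N, (f i (γ (((i : ℝ) + 1) / N)) - f i (γ ((i : ℝ) / N)))

lemma sum_grid (h : ℕ → ℂ) (N M : ℕ) :
    ∑ j ∈ Finset.range (N * M), h j
      = ∑ i ∈ Finset.range N, ∑ k ∈ Finset.range M, h (i * M + k) := by
  induction N with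
  | zero => simp
  | succ N ih => rw [Nat.succ_mul, Finset.sum_range_add, ih, Finset.sum_range_succ]

lemma FormChain.refine {ω : E → E →L[ℝ] ℂ} {γ : ℝ → E} {N : ℕ} {f : ℕ → E → ℂ} {s : ℕ → Set E}
    (h : FormChain ω γ N f s) {M : ℕ} (hM : 0 < M) :
    FormChain ω γ (N * M) (fun j => f (j / M)) (fun j => s (j / M)) := by
  intro j hj
  have hN : 0 < N := by
    rcases Nat.eq_zero_or_pos N with h0 | h0
    · simp [h0] at hj
    · exact h0
  have hiN : j / M < N := Nat.div_lt_of_lt_mul (by rwa [Nat.mul_comm] at hj)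
  obtain ⟨hconv, hprim, hmem⟩ := h (j / M) hiN
  refine ⟨hconv, hprim, ?_⟩
  intro t h1 h2
  have c1 : ((j / M : ℕ) : ℝ) * M ≤ (j : ℝ) := by exact_mod_cast Nat.div_mul_le_self j M
  have c2 : (j : ℝ) + 1 ≤ (((j / M : ℕ) : ℝ) + 1) * M := by
    have : j + 1 ≤ (j / M) * M + M := by
      have h1 := Nat.div_add_mod j M
      have hlt : j % M < M := Nat.mod_lt _ hM
      have h2 : M * (j / M) = (j / M) * M := Nat.mul_comm _ _
      omega
    calc (j : ℝ) + 1 ≤ (((j / M) * M + M : ℕ) : ℝ) := by exact_mod_cast this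
      _ = (((j / M : ℕ) : ℝ) + 1) * M := by push_cast; ring
  have hNpos : (0:ℝ) < (N : ℝ) := by exact_mod_cast hN
  have hMpos : (0:ℝ) < (M : ℝ) := by exact_mod_cast hM
  have hNM : (0:ℝ) < ((N * M : ℕ) : ℝ) := by positivity
  apply hmem t
  · refine le_trans ?_ h1
    rw [div_le_div_iff₀ hNpos hNM]
    push_cast
    nlinarith
  · refine le_trans h2 ?_
    rw [div_le_div_iff₀ hNM hNpos]
    push_cast
    nlinarith

lemma chainSum_refine {γ : ℝ → E} {N : ℕ} (f : ℕ → E → ℂ) {M : ℕ} (hM : 0 < M) :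
    chainSum γ (N * M) (fun j => f (j / M)) = chainSum γ N f := by
  rcases Nat.eq_zero_or_pos N with h0 | hN
  · simp [chainSum, h0]
  have hNpos : (0:ℝ) < (N : ℝ) := by exact_mod_cast hN
  have hMpos : (0:ℝ) < (M : ℝ) := by exact_mod_cast hM
  unfold chainSum
  rw [sum_grid]
  apply Finset.sum_congr rfl
  intro i hi
  have hiN : i < N := Finset.mem_range.mp hi
  have hdiv : ∀ k, k < M → (i * M + k) / M = i := fun k hk => by
    rw [Nat.add_comm, Nat.add_mul_div_right _ _ hM, Nat.div_eq_of_lt hk, Nat.zero_add]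
  set G : ℕ → ℂ := fun k => f i (γ (((i * M + k : ℕ) : ℝ) / ((N * M : ℕ) : ℝ))) with hG
  have hterm : ∀ k ∈ Finset.range M,
      f ((i * M + k) / M) (γ ((((i * M + k : ℕ) : ℝ) + 1) / ((N * M : ℕ) : ℝ)))
        - f ((i * M + k) / M) (γ (((i * M + k : ℕ) : ℝ) / ((N * M : ℕ) : ℝ)))
      = G (k + 1) - G k := by
    intro k hk
    have hk' : k < M := Finset.mem_range.mp hk
    have eA : (((i * M + k : ℕ) : ℝ) + 1) / ((N * M : ℕ) : ℝ)
        = ((i * M + (k + 1) : ℕ) : ℝ) / ((N * M : ℕ) : ℝ) := by push_cast; ring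
    rw [hdiv k hk', eA]
  rw [Finset.sum_congr rfl hterm, Finset.sum_range_sub G]
  have e1 : ((i * M + M : ℕ) : ℝ) / ((N * M : ℕ) : ℝ) = ((i : ℝ) + 1) / (N : ℝ) := by
    push_cast
    rw [div_eq_div_iff (by positivity) (by positivity)]
    ring
  have e2 : ((i * M + 0 : ℕ) : ℝ) / ((N * M : ℕ) : ℝ) = (i : ℝ) / (N : ℝ) := by
    push_cast
    rw [div_eq_div_iff (by positivity) (by positivity)]
    ring
  rw [hG]
  simp only []
  rw [e1, e2]

lemma chainSum_congr {ω : E → E →L[ℝ] ℂ} {γ : ℝ → E} {N : ℕ} {f f' : ℕ → E → ℂ}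
    {s s' : ℕ → Set E} (h : FormChain ω γ N f s) (h' : FormChain ω γ N f' s') :
    chainSum γ N f = chainSum γ N f' := by
  unfold chainSum
  apply Finset.sum_congr rfl
  intro i hi
  have hiN : i < N := Finset.mem_range.mp hi
  have hNpos : (0:ℝ) < (N : ℝ) := by exact_mod_cast Nat.pos_of_ne_zero (by omega)
  obtain ⟨hc, hp, hm⟩ := h i hiN
  obtain ⟨hc', hp', hm'⟩ := h' i hiN
  have hle : (i : ℝ) / N ≤ ((i : ℝ) + 1) / N := by gcongr; linarith
  have hpmem : γ ((i : ℝ) / N) ∈ s i ∩ s' i :=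
    ⟨hm _ le_rfl hle, hm' _ le_rfl hle⟩
  have hqmem : γ (((i : ℝ) + 1) / N) ∈ s i ∩ s' i :=
    ⟨hm _ hle le_rfl, hm' _ hle le_rfl⟩
  have key := const_diff (hc.inter hc')
    (fun y hy => hp y hy.1) (fun y hy => hp' y hy.2) hpmem hqmem
  linear_combination key

lemma chainSum_eq {ω : E → E →L[ℝ] ℂ} {γ : ℝ → E} {N N' : ℕ} {f f' : ℕ → E → ℂ}
    {s s' : ℕ → Set E} (hN : 0 < N) (hN' : 0 < N')
    (h : FormChain ω γ N f s) (h' : FormChain ω γ N' f' s') :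
    chainSum γ N f = chainSum γ N' f' := by
  have h1 := h.refine (M := N') hN'
  have h2 := h'.refine (M := N) hN
  rw [Nat.mul_comm] at h2
  calc chainSum γ N f = chainSum γ (N * N') (fun j => f (j / N')) :=
        (chainSum_refine f hN').symm
    _ = chainSum γ (N * N') (fun j => f' (j / N)) := chainSum_congr h1 h2
    _ = chainSum γ N' f' := by
        rw [Nat.mul_comm]
        exact chainSum_refine f' hN

end Chains

section Exist

variable {E : Type*} [NormedAddCommGroup E] [NormedSpace ℝ E] [ProperSpace E]

lemma exists_chain {U : Set E} (hU : IsOpen U) {ω : E → E →L[ℝ] ℂ}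
    (hω : ContDiffOn ℝ 1 ω U)
    (hclosed : ∀ x ∈ U, ∀ v w : E, (fderiv ℝ ω x v) w = (fderiv ℝ ω x w) v)
    {γ : ℝ → E} (hγ : Continuous γ) (him : ∀ t ∈ Icc (0:ℝ) 1, γ t ∈ U) :
    ∃ N f s, 0 < N ∧ FormChain ω γ N f s := by
  have hK : IsCompact (γ '' Icc (0:ℝ) 1) := isCompact_Icc.image hγ
  have hKU : γ '' Icc 0 1 ⊆ U := by rintro _ ⟨t, ht, rfl⟩; exact him t ht
  obtain ⟨δ, hδ, hδU⟩ := hK.exists_thickening_subset_open hU hKU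
  obtain ⟨δ', hδ', huc⟩ := Metric.uniformContinuousOn_iff.mp
    (isCompact_Icc.uniformContinuousOn_of_continuous hγ.continuousOn) δ hδ
  obtain ⟨m, hm⟩ := exists_nat_one_div_lt hδ'
  set N : ℕ := m + 1 with hN_def
  have hNpos : (0:ℝ) < (N:ℝ) := by positivity
  have hmem : ∀ i : ℕ, i < N → ((i:ℝ)/N) ∈ Icc (0:ℝ) 1 := by
    intro i hi
    constructor
    · positivity
    · rw [div_le_one hNpos]; exact_mod_cast hi.le
  have hball : ∀ i : ℕ, i < N → ball (γ ((i:ℝ)/N)) δ ⊆ U := fun i hi =>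
    (ball_subset_thickening (mem_image_of_mem γ (hmem i hi)) δ).trans hδU
  refine ⟨N, fun i => if h : i < N then
      Classical.choose (local_primitive hU hω hclosed (hball i h)) else 0,
    fun i => ball (γ ((i:ℝ)/N)) δ, Nat.succ_pos m, ?_⟩
  intro i hi
  refine ⟨convex_ball _ _, ?_, ?_⟩
  · intro y hy
    simp only [dif_pos hi]
    exact Classical.choose_spec (local_primitive hU hω hclosed (hball i hi)) y hy
  · intro t h1 h2
    have hi1 : (i:ℝ) + 1 ≤ N := by exact_mod_cast hi
    have ht : t ∈ Icc (0:ℝ) 1 := by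
      constructor
      · exact le_trans (by positivity) h1
      · exact h2.trans (by rw [div_le_one hNpos]; exact hi1)
    have hdist : dist t ((i:ℝ)/N) < δ' := by
      rw [Real.dist_eq]
      have h3 : t - (i:ℝ)/N ≤ 1/N := by
        have : ((i:ℝ)+1)/N - (i:ℝ)/N = 1/N := by ring
        linarith
      have h4 : (0:ℝ) ≤ t - (i:ℝ)/N := by linarith
      rw [abs_of_nonneg h4]
      calc t - (i:ℝ)/N ≤ 1/N := h3
        _ = 1/(m+1) := by rw [hN_def]; push_cast; ring
        _ < δ' := hm
    exact mem_ball.mpr (huc t ht ((i:ℝ)/N) (hmem i hi) hdist)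

lemma chainSum_homotopy {U : Set E} (hU : IsOpen U) {ω : E → E →L[ℝ] ℂ}
    (hω : ContDiffOn ℝ 1 ω U)
    (hclosed : ∀ x ∈ U, ∀ v w : E, (fderiv ℝ ω x v) w = (fderiv ℝ ω x w) v)
    {H : ℝ → ℝ → E} (hH : Continuous fun p : ℝ × ℝ => H p.1 p.2)
    (him : ∀ σ ∈ Icc (0:ℝ) 1, ∀ t ∈ Icc (0:ℝ) 1, H σ t ∈ U)
    (hz : ∀ σ ∈ Icc (0:ℝ) 1, H σ 0 = H 0 0)
    (ho : ∀ σ ∈ Icc (0:ℝ) 1, H σ 1 = H 0 1)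
    {N : ℕ} {f : ℕ → E → ℂ} {s : ℕ → Set E} (hN : 0 < N) (hc : FormChain ω (H 0) N f s)
    {N' : ℕ} {f' : ℕ → E → ℂ} {s' : ℕ → Set E} (hN' : 0 < N')
    (hc' : FormChain ω (H 1) N' f' s') :
    chainSum (H 0) N f = chainSum (H 1) N' f' := by
  set Q : Set (ℝ × ℝ) := Icc (0:ℝ) 1 ×ˢ Icc (0:ℝ) 1 with hQ_def
  have hQc : IsCompact Q := isCompact_Icc.prod isCompact_Icc
  have hK : IsCompact ((fun p : ℝ × ℝ => H p.1 p.2) '' Q) := hQc.image hH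
  have hKU : (fun p : ℝ × ℝ => H p.1 p.2) '' Q ⊆ U := by
    rintro _ ⟨⟨σ, t⟩, ⟨hσ, ht⟩, rfl⟩
    exact him σ hσ t ht
  obtain ⟨δ, hδ, hδU⟩ := hK.exists_thickening_subset_open hU hKU
  obtain ⟨δ', hδ', huc⟩ := Metric.uniformContinuousOn_iff.mp
    (hQc.uniformContinuousOn_of_continuous hH.continuousOn) δ hδ
  obtain ⟨m, hm⟩ := exists_nat_one_div_lt hδ'
  set M : ℕ := m + 1 with hM_def
  have hM : 0 < M := Nat.succ_pos m
  have hMpos : (0:ℝ) < (M:ℝ) := by positivity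
  have hfrac : ∀ i : ℕ, i ≤ M → ((i:ℝ)/M) ∈ Icc (0:ℝ) 1 := by
    intro i hi
    exact ⟨by positivity, by rw [div_le_one hMpos]; exact_mod_cast hi⟩
  have hQmem : ∀ i j : ℕ, i ≤ M → j ≤ M → (((i:ℝ)/M, (j:ℝ)/M) : ℝ × ℝ) ∈ Q :=
    fun i j hi hj => ⟨hfrac i hi, hfrac j hj⟩
  have hball : ∀ i j : ℕ, i ≤ M → j ≤ M → ball (H ((i:ℝ)/M) ((j:ℝ)/M)) δ ⊆ U := by
    intro i j hi hj
    exact (ball_subset_thickening (mem_image_of_mem _ (hQmem i j hi hj)) δ).trans hδU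
  -- the grid primitives
  have hprim : ∀ i j : ℕ, ∃ φ : E → ℂ, i ≤ M → j ≤ M →
      ∀ y ∈ ball (H ((i:ℝ)/M) ((j:ℝ)/M)) δ, HasFDerivAt φ (ω y) y := by
    intro i j
    by_cases h : i ≤ M ∧ j ≤ M
    · obtain ⟨φ, hφ⟩ := local_primitive hU hω hclosed (hball i j h.1 h.2)
      exact ⟨φ, fun _ _ => hφ⟩
    · exact ⟨0, fun hi hj => absurd ⟨hi, hj⟩ h⟩
  choose ψ hψ using hprim
  -- membership of grid squares in grid balls
  have hsq : ∀ i j : ℕ, i < M → j < M → ∀ σ, (i:ℝ)/M ≤ σ → σ ≤ ((i:ℝ)+1)/M →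
      ∀ t, (j:ℝ)/M ≤ t → t ≤ ((j:ℝ)+1)/M → H σ t ∈ ball (H ((i:ℝ)/M) ((j:ℝ)/M)) δ := by
    intro i j hi hj σ hσ1 hσ2 t ht1 ht2
    have hi1 : (i:ℝ) + 1 ≤ M := by exact_mod_cast hi
    have hj1 : (j:ℝ) + 1 ≤ M := by exact_mod_cast hj
    have hσI : σ ∈ Icc (0:ℝ) 1 :=
      ⟨le_trans (by positivity) hσ1, hσ2.trans (by rw [div_le_one hMpos]; exact hi1)⟩
    have htI : t ∈ Icc (0:ℝ) 1 :=
      ⟨le_trans (by positivity) ht1, ht2.trans (by rw [div_le_one hMpos]; exact hj1)⟩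
    have hdist : dist ((σ, t) : ℝ × ℝ) (((i:ℝ)/M, (j:ℝ)/M) : ℝ × ℝ) < δ' := by
      rw [Prod.dist_eq]
      have e1 : ((i:ℝ)+1)/M - (i:ℝ)/M = 1/M := by ring
      have e2 : ((j:ℝ)+1)/M - (j:ℝ)/M = 1/M := by ring
      have d1 : dist σ ((i:ℝ)/M) ≤ 1/M := by
        rw [Real.dist_eq, abs_of_nonneg (by linarith)]; linarith
      have d2 : dist t ((j:ℝ)/M) ≤ 1/M := by
        rw [Real.dist_eq, abs_of_nonneg (by linarith)]; linarith
      have : (1:ℝ)/M < δ' := by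
        calc (1:ℝ)/M = 1/(m+1) := by rw [hM_def]; push_cast; ring
          _ < δ' := hm
      exact lt_of_le_of_lt (max_le d1 d2) this
    exact mem_ball.mpr (huc (σ, t) ⟨hσI, htI⟩ _ (hQmem i j hi.le hj.le) hdist)
  -- row chains
  have hrow : ∀ i : ℕ, i < M → ∀ σ, (i:ℝ)/M ≤ σ → σ ≤ ((i:ℝ)+1)/M →
      FormChain ω (H σ) M (ψ i) (fun j => ball (H ((i:ℝ)/M) ((j:ℝ)/M)) δ) := by
    intro i hi σ hσ1 hσ2 j hj
    exact ⟨convex_ball _ _, hψ i j hi.le hj.le,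
      fun t ht1 ht2 => hsq i j hi hj σ hσ1 hσ2 t ht1 ht2⟩
  -- row step: chainSum is unchanged from row i to row i+1
  have hstep : ∀ i : ℕ, i < M →
      chainSum (H ((i:ℝ)/M)) M (ψ i) = chainSum (H (((i:ℝ)+1)/M)) M (ψ i) := by
    intro i hi
    set γ : ℝ → E := H ((i:ℝ)/M) with hγ_def
    set γ' : ℝ → E := H (((i:ℝ)+1)/M) with hγ'_def
    have hσl : (i:ℝ)/M ≤ (i:ℝ)/M := le_rfl
    have hσr : (i:ℝ)/M ≤ ((i:ℝ)+1)/M := by gcongr <;> linarith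
    have hσr' : ((i:ℝ)+1)/M ≤ ((i:ℝ)+1)/M := le_rfl
    set G : ℕ → ℂ := fun j =>
      ψ i (min j (M-1)) (γ' ((j:ℝ)/M)) - ψ i (min j (M-1)) (γ ((j:ℝ)/M)) with hG_def
    have hclaim : ∀ j ∈ Finset.range M,
        (ψ i j (γ' (((j:ℝ)+1)/M)) - ψ i j (γ' ((j:ℝ)/M)))
          - (ψ i j (γ (((j:ℝ)+1)/M)) - ψ i j (γ ((j:ℝ)/M))) = G (j+1) - G j := by
      intro j hjr
      have hj : j < M := Finset.mem_range.mp hjr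
      have hminj : min j (M-1) = j := by omega
      have hcast : ((j+1 : ℕ) : ℝ) = (j:ℝ) + 1 := by push_cast; ring
      have hGj : G j = ψ i j (γ' ((j:ℝ)/M)) - ψ i j (γ ((j:ℝ)/M)) := by
        rw [hG_def]; simp only [hminj]
      by_cases hj1 : j + 1 < M
      · have hminj1 : min (j+1) (M-1) = j+1 := by omega
        have hGj1 : G (j+1) = ψ i (j+1) (γ' (((j:ℝ)+1)/M)) - ψ i (j+1) (γ (((j:ℝ)+1)/M)) := by
          rw [hG_def]; simp only [hminj1, hcast]
        have hjlo : (j:ℝ)/M ≤ ((j:ℝ)+1)/M := by gcongr <;> linarith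
        have hx1 : γ (((j:ℝ)+1)/M) ∈ ball (H ((i:ℝ)/M) ((j:ℝ)/M)) δ :=
          hsq i j hi hj _ hσl hσr _ hjlo le_rfl
        have hy1 : γ' (((j:ℝ)+1)/M) ∈ ball (H ((i:ℝ)/M) ((j:ℝ)/M)) δ :=
          hsq i j hi hj _ hσr hσr' _ hjlo le_rfl
        have hlo2 : ((j+1:ℕ):ℝ)/M ≤ ((j:ℝ)+1)/M := le_of_eq (by rw [hcast])
        have hhi2 : ((j:ℝ)+1)/M ≤ (((j+1:ℕ):ℝ) + 1)/M := by rw [hcast]; gcongr <;> linarith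
        have hx2 : γ (((j:ℝ)+1)/M) ∈ ball (H ((i:ℝ)/M) (((j+1:ℕ):ℝ)/M)) δ :=
          hsq i (j+1) hi hj1 _ hσl hσr _ hlo2 hhi2
        have hy2 : γ' (((j:ℝ)+1)/M) ∈ ball (H ((i:ℝ)/M) (((j+1:ℕ):ℝ)/M)) δ :=
          hsq i (j+1) hi hj1 _ hσr hσr' _ hlo2 hhi2
        have key := const_diff ((convex_ball _ _).inter (convex_ball _ _))
          (fun y hy => hψ i j hi.le hj.le y hy.1)
          (fun y hy => hψ i (j+1) hi.le hj1.le y hy.2)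
          ⟨hx1, hx2⟩ ⟨hy1, hy2⟩
        rw [hGj, hGj1]
        linear_combination key
      · have hminj1 : min (j+1) (M-1) = j := by omega
        have hGj1 : G (j+1) = ψ i j (γ' (((j:ℝ)+1)/M)) - ψ i j (γ (((j:ℝ)+1)/M)) := by
          rw [hG_def]; simp only [hminj1, hcast]
        rw [hGj, hGj1]
        ring
    have hsum : chainSum γ' M (ψ i) - chainSum γ M (ψ i)
        = ∑ j ∈ Finset.range M, (G (j+1) - G j) := by
      rw [chainSum, chainSum, ← Finset.sum_sub_distrib]
      exact Finset.sum_congr rfl hclaim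
    rw [Finset.sum_range_sub G] at hsum
    have hiI : (i:ℝ)/M ∈ Icc (0:ℝ) 1 := hfrac i hi.le
    have hiI' : ((i:ℝ)+1)/M ∈ Icc (0:ℝ) 1 := by
      have := hfrac (i+1) (by omega)
      rwa [show ((i+1:ℕ):ℝ) = (i:ℝ)+1 by push_cast; ring] at this
    have hGM : G M = 0 := by
      have hMM : ((M:ℕ):ℝ)/M = 1 := div_self (ne_of_gt hMpos)
      have h1 : γ' 1 = γ 1 := by
        rw [hγ_def, hγ'_def, ho _ hiI', ho _ hiI]
      rw [hG_def]
      simp only [hMM, h1, sub_self]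
    have hG0 : G 0 = 0 := by
      have h00 : ((0:ℕ):ℝ)/M = 0 := by norm_num
      have h1 : γ' 0 = γ 0 := by
        rw [hγ_def, hγ'_def, hz _ hiI', hz _ hiI]
      rw [hG_def]
      simp only [h00, h1, sub_self, Nat.cast_zero, zero_div]
    rw [hGM, hG0, _root_.sub_zero] at hsum
    exact (sub_eq_zero.mp hsum).symm
  -- transport along rows by induction
  have hind : ∀ i : ℕ, i ≤ M →
      chainSum (H ((i:ℝ)/M)) M (ψ (min i (M-1))) = chainSum (H 0) N f := by
    intro i
    induction i with
    | zero =>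
        intro _
        have h00 : ((0:ℕ):ℝ)/M = 0 := by norm_num
        have hmin0 : min 0 (M-1) = 0 := by omega
        rw [h00, hmin0]
        have hr0 := hrow 0 hM 0 (le_of_eq (by norm_num)) (by positivity)
        rw [show H (((0:ℕ):ℝ)/M) = H 0 from by rw [h00]] at hr0
        exact chainSum_eq hM hN hr0 hc
    | succ i ih =>
        intro hi1
        have hi : i < M := by omega
        have ihv := ih hi.le
        have hmini : min i (M-1) = i := by omega
        rw [hmini] at ihv
        have hcast : ((i+1:ℕ):ℝ) = (i:ℝ)+1 := by push_cast; ring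
        have hstepi := hstep i hi
        have hσr : (i:ℝ)/M ≤ ((i:ℝ)+1)/M := by gcongr <;> linarith
        by_cases hj1 : i + 1 < M
        · have hmin1 : min (i+1) (M-1) = i+1 := by omega
          rw [hmin1, hcast]
          have c1 := hrow (i+1) hj1 (((i:ℝ)+1)/M) (le_of_eq (by rw [hcast]))
            (by rw [hcast]; gcongr <;> linarith)
          have c2 := hrow i hi (((i:ℝ)+1)/M) hσr le_rfl
          calc chainSum (H (((i:ℝ)+1)/M)) M (ψ (i+1))
              = chainSum (H (((i:ℝ)+1)/M)) M (ψ i) := chainSum_eq hM hM c1 c2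
            _ = chainSum (H ((i:ℝ)/M)) M (ψ i) := hstepi.symm
            _ = chainSum (H 0) N f := ihv
        · have hmin1 : min (i+1) (M-1) = i := by omega
          rw [hmin1, hcast, ← hstepi]
          exact ihv
  have hfin := hind M le_rfl
  have hMM : ((M:ℕ):ℝ)/M = 1 := div_self (ne_of_gt hMpos)
  have hminM : min M (M-1) = M - 1 := by omega
  rw [hMM, hminM] at hfin
  have h1M : M - 1 < M := by omega
  have e : ((M-1:ℕ):ℝ) + 1 = (M:ℝ) := by
    have h1le : (1:ℕ) ≤ M := hM
    push_cast [h1le]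
    ring
  have hlast := hrow (M-1) h1M 1
    (by rw [div_le_one hMpos]; exact_mod_cast Nat.sub_le M 1)
    (le_of_eq (by rw [e, div_self (ne_of_gt hMpos)]))
  exact hfin.symm.trans (chainSum_eq hM hN' hlast hc')

end Exist

section PathFun

variable {X : Type*} [TopologicalSpace X] {U : Set X}

/-- A path in the subtype `U`, as a function `ℝ → X` (constant outside `[0,1]`). -/
noncomputable def pathFun {u v : U} (p : Path u v) : ℝ → X :=
  fun t => ((p (Set.projIcc 0 1 zero_le_one t)) : X)

lemma pathFun_cont {u v : U} (p : Path u v) : Continuous (pathFun p) :=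
  continuous_subtype_val.comp (p.continuous.comp continuous_projIcc)

lemma pathFun_mem {u v : U} (p : Path u v) (t : ℝ) : pathFun p t ∈ U :=
  (p (Set.projIcc 0 1 zero_le_one t)).2

lemma pathFun_of_mem {u v : U} (p : Path u v) {t : ℝ} (ht : t ∈ Set.Icc (0:ℝ) 1) :
    pathFun p t = (p ⟨t, ht⟩ : X) := by
  unfold pathFun
  rw [Set.projIcc_of_mem]

lemma pathFun_zero {u v : U} (p : Path u v) : pathFun p 0 = (u : X) := by
  rw [pathFun_of_mem p (Set.left_mem_Icc.mpr zero_le_one)]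
  have : (⟨0, Set.left_mem_Icc.mpr zero_le_one⟩ : unitInterval) = 0 := rfl
  rw [this, p.source]

lemma pathFun_one {u v : U} (p : Path u v) : pathFun p 1 = (v : X) := by
  rw [pathFun_of_mem p (Set.right_mem_Icc.mpr zero_le_one)]
  have : (⟨1, Set.right_mem_Icc.mpr zero_le_one⟩ : unitInterval) = 1 := rfl
  rw [this, p.target]

lemma pathFun_trans_left {u v w : U} (p : Path u v) (q : Path v w) {t : ℝ}
    (h0 : 0 ≤ t) (h2 : t ≤ 1/2) : pathFun (p.trans q) t = pathFun p (2*t) := by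
  have ht : t ∈ Set.Icc (0:ℝ) 1 := ⟨h0, by linarith⟩
  have h2t : 2*t ∈ Set.Icc (0:ℝ) 1 := ⟨by linarith, by linarith⟩
  rw [pathFun_of_mem _ ht, pathFun_of_mem _ h2t, Path.trans_apply]
  rw [dif_pos h2]

lemma pathFun_trans_right {u v w : U} (p : Path u v) (q : Path v w) {t : ℝ}
    (h0 : 1/2 ≤ t) (h2 : t ≤ 1) : pathFun (p.trans q) t = pathFun q (2*t - 1) := by
  have ht : t ∈ Set.Icc (0:ℝ) 1 := ⟨by linarith, h2⟩
  have h2t : 2*t - 1 ∈ Set.Icc (0:ℝ) 1 := ⟨by linarith, by linarith⟩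
  rw [pathFun_of_mem _ ht, pathFun_of_mem _ h2t, Path.trans_apply]
  by_cases hc : t ≤ 1/2
  · have ht2 : t = 1/2 := le_antisymm hc h0
    rw [dif_pos hc]
    have e1 : (⟨2 * ((⟨t, ht⟩ : unitInterval) : ℝ), by simp [ht2]⟩ : unitInterval)
        = 1 := by ext; simp [ht2]
    have e2 : (⟨2*t - 1, h2t⟩ : unitInterval) = 0 := by ext; simp [ht2]
    rw [e1, e2, p.target, q.source]
  · rw [dif_neg hc]

end PathFun


set_option maxHeartbeats 1000000 in
/-- Poincaré lemma for closed complex-valued 1-forms on simply connected open subsets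
of `ℝⁿ`: a `C¹` 1-form `ω` with symmetric derivative (`∂_j ω_k = ∂_k ω_j`) on a simply
connected open set `U` admits a primitive `φ` with `Dφ(x) = ω(x)` on `U`. -/
theorem poincare_lemma_closed_one_form {n : ℕ} (hn : 1 ≤ n)
    (U : Set (EuclideanSpace ℝ (Fin n))) (hU : IsOpen U)
    (hsc : SimplyConnectedSpace U)
    (ω : EuclideanSpace ℝ (Fin n) → (EuclideanSpace ℝ (Fin n) →L[ℝ] ℂ))
    (hω : ContDiffOn ℝ 1 ω U)
    (hclosed : ∀ x ∈ U, ∀ v w : EuclideanSpace ℝ (Fin n),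
      (fderiv ℝ ω x v) w = (fderiv ℝ ω x w) v) :
    ∃ φ : EuclideanSpace ℝ (Fin n) → ℂ, ∀ x ∈ U, HasFDerivAt φ (ω x) x := by
  classical
  haveI := hsc
  haveI : PathConnectedSpace ↥U := inferInstance
  obtain ⟨x₀⟩ : Nonempty ↥U := PathConnectedSpace.nonempty
  have hex : ∀ x, ∀ hx : x ∈ U, ∃ N g s, 0 < N ∧
      FormChain ω (pathFun (PathConnectedSpace.somePath x₀ ⟨x, hx⟩)) N g s :=
    fun x hx => exists_chain hU hω hclosed (pathFun_cont _) (fun t _ => pathFun_mem _ t)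
  choose cN cf cs hcpos hcchain using hex
  set Φ : EuclideanSpace ℝ (Fin n) → ℂ := fun x => if hx : x ∈ U then
      chainSum (pathFun (PathConnectedSpace.somePath x₀ ⟨x, hx⟩)) (cN x hx) (cf x hx)
    else 0 with hΦ_def
  refine ⟨Φ, ?_⟩
  intro x hx
  obtain ⟨r, hr, hball⟩ : ∃ ε > 0, ball x ε ⊆ U := Metric.isOpen_iff.mp hU x hx
  obtain ⟨ψ, hψ⟩ := local_primitive hU hω hclosed hball
  have key : ∀ y ∈ ball x r, Φ y = Φ x + (ψ y - ψ x) := by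
    intro y hy
    have hyU : y ∈ U := hball hy
    set px := PathConnectedSpace.somePath x₀ (⟨x, hx⟩ : U) with hpx
    set py := PathConnectedSpace.somePath x₀ (⟨y, hyU⟩ : U) with hpy
    have hsegmem : ∀ c : ℝ, 0 ≤ c → c ≤ 1 → x + c • (y - x) ∈ ball x r := by
      intro c h0 h1
      rw [mem_ball, dist_eq_norm]
      have e : x + c • (y - x) - x = c • (y - x) := by abel
      rw [e, norm_smul, Real.norm_eq_abs, abs_of_nonneg h0]
      have hyx : ‖y - x‖ < r := by rw [← dist_eq_norm]; exact mem_ball.mp hy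
      nlinarith [norm_nonneg (y - x)]
    set seg : Path (⟨x, hx⟩ : U) (⟨y, hyU⟩ : U) :=
      { toFun := fun c => ⟨x + (c : ℝ) • (y - x), hball (hsegmem c c.2.1 c.2.2)⟩
        continuous_toFun := by
          apply Continuous.subtype_mk
          exact continuous_const.add (continuous_subtype_val.smul continuous_const)
        source' := by apply Subtype.ext; simp
        target' := by apply Subtype.ext; simp } with hseg_def
    have hsegval : ∀ c : ℝ, ∀ hc : c ∈ Icc (0:ℝ) 1, pathFun seg c = x + c • (y - x) := by
      intro c hc
      rw [pathFun_of_mem seg hc]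
      rfl
    set q := px.trans seg with hq_def
    obtain ⟨F⟩ := SimplyConnectedSpace.paths_homotopic q py
    set Hf : ℝ → ℝ → EuclideanSpace ℝ (Fin n) := fun σ t =>
      ((F (Set.projIcc 0 1 zero_le_one σ, Set.projIcc 0 1 zero_le_one t) : U) :
        EuclideanSpace ℝ (Fin n)) with hHf_def
    have hproj0 : Set.projIcc (0:ℝ) 1 zero_le_one 0 = 0 := by
      ext; rw [Set.coe_projIcc]; norm_num
    have hproj1 : Set.projIcc (0:ℝ) 1 zero_le_one 1 = 1 := by
      ext; rw [Set.coe_projIcc]; norm_num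
    have hH0 : Hf 0 = pathFun q := by
      funext t
      rw [hHf_def]
      simp only [hproj0]
      rw [F.apply_zero (Set.projIcc (0:ℝ) 1 zero_le_one t)]
      rfl
    have hH1 : Hf 1 = pathFun py := by
      funext t
      rw [hHf_def]
      simp only [hproj1]
      rw [F.apply_one (Set.projIcc (0:ℝ) 1 zero_le_one t)]
      rfl
    have hHcont : Continuous fun p : ℝ × ℝ => Hf p.1 p.2 := by
      apply continuous_subtype_val.comp
      exact F.continuous.comp ((continuous_projIcc.comp continuous_fst).prodMk
        (continuous_projIcc.comp continuous_snd))
    have hHU : ∀ σ ∈ Icc (0:ℝ) 1, ∀ t ∈ Icc (0:ℝ) 1, Hf σ t ∈ U := fun σ _ t _ =>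
      (F (Set.projIcc 0 1 zero_le_one σ, Set.projIcc 0 1 zero_le_one t)).2
    have hHz : ∀ σ ∈ Icc (0:ℝ) 1, Hf σ 0 = Hf 0 0 := by
      intro σ _
      rw [hHf_def]
      simp only [hproj0]
      rw [Path.Homotopy.source, Path.Homotopy.source]
    have hHo : ∀ σ ∈ Icc (0:ℝ) 1, Hf σ 1 = Hf 0 1 := by
      intro σ _
      rw [hHf_def]
      simp only [hproj1]
      rw [Path.Homotopy.target, Path.Homotopy.target]
    -- the chain along `py`
    have hchain_py : FormChain ω (Hf 1) (cN y hyU) (cf y hyU) (cs y hyU) := by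
      rw [hH1]; exact hcchain y hyU
    -- the chain along `q`
    set Nx := cN x hx with hNx_def
    have hNx : 0 < Nx := hcpos x hx
    set gx := cf x hx with hgx_def
    set sx := cs x hx with hsx_def
    have hchx : FormChain ω (pathFun px) Nx gx sx := hcchain x hx
    set g2 : ℕ → EuclideanSpace ℝ (Fin n) → ℂ := fun j => if j < Nx then gx j else ψ with hg2
    set s2 : ℕ → Set (EuclideanSpace ℝ (Fin n)) := fun j =>
      if j < Nx then sx j else ball x r with hs2
    have hNxpos : (0:ℝ) < (Nx:ℝ) := by exact_mod_cast hNx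
    have h2Nx : (((2*Nx : ℕ)):ℝ) = 2*(Nx:ℝ) := by push_cast; ring
    have hchain_q : FormChain ω (Hf 0) (2*Nx) g2 s2 := by
      rw [hH0]
      intro j hj
      by_cases hjN : j < Nx
      · obtain ⟨hcv, hpr, hmm⟩ := hchx j hjN
        refine ⟨by simp only [hs2, if_pos hjN]; exact hcv, ?_, ?_⟩
        · intro z hz
          simp only [hs2, hg2, if_pos hjN] at hz ⊢
          exact hpr z hz
        · intro t h1 h2
          simp only [hs2, if_pos hjN]
          have hj1 : (j:ℝ) + 1 ≤ (Nx:ℝ) := by exact_mod_cast hjN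
          have hj0 : (0:ℝ) ≤ (j:ℝ) := by positivity
          rw [h2Nx] at h1 h2
          have h0t : 0 ≤ t := le_trans (by positivity) h1
          have ht2 : t ≤ 1/2 := by
            apply h2.trans
            rw [div_le_div_iff₀ (by positivity) (by norm_num)]
            nlinarith
          rw [pathFun_trans_left px seg h0t ht2]
          apply hmm
          · rw [div_le_iff₀ hNxpos]
            rw [div_le_iff₀ (by positivity)] at h1
            linarith
          · rw [le_div_iff₀ hNxpos]
            rw [le_div_iff₀ (by positivity)] at h2
            linarith
      · refine ⟨by simp only [hs2, if_neg hjN]; exact convex_ball x r, ?_, ?_⟩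
        · intro z hz
          simp only [hs2, hg2, if_neg hjN] at hz ⊢
          exact hψ z hz
        · intro t h1 h2
          simp only [hs2, if_neg hjN]
          have hjN' : (Nx:ℝ) ≤ (j:ℝ) := by exact_mod_cast Nat.le_of_not_lt hjN
          have hj2 : (j:ℝ) + 1 ≤ 2*(Nx:ℝ) := by exact_mod_cast hj
          rw [h2Nx] at h1 h2
          have ht1 : 1/2 ≤ t := by
            refine le_trans ?_ h1
            rw [div_le_div_iff₀ (by norm_num) (by positivity)]
            nlinarith
          have ht2 : t ≤ 1 := by
            apply h2.trans
            rw [div_le_one (by positivity)]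
            linarith
          rw [pathFun_trans_right px seg ht1 ht2]
          rw [hsegval (2*t - 1) ⟨by linarith, by linarith⟩]
          exact hsegmem (2*t - 1) (by linarith) (by linarith)
    -- value of the chain along `q`
    have hval : chainSum (pathFun q) (2*Nx) g2
        = chainSum (pathFun px) Nx gx + (ψ y - ψ x) := by
      rw [chainSum, chainSum, two_mul, Finset.sum_range_add]
      have hD : ((Nx + Nx : ℕ):ℝ) = 2*(Nx:ℝ) := by push_cast; ring
      congr 1
      · apply Finset.sum_congr rfl
        intro i hi
        have hiN : i < Nx := Finset.mem_range.mp hi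
        have hi1 : (i:ℝ) + 1 ≤ (Nx:ℝ) := by exact_mod_cast hiN
        have hi0 : (0:ℝ) ≤ (i:ℝ) := by positivity
        have e1 : pathFun q (((i:ℝ)+1)/((Nx + Nx : ℕ):ℝ)) = pathFun px (((i:ℝ)+1)/(Nx:ℝ)) := by
          rw [pathFun_trans_left px seg (by rw [hD]; positivity)
            (by rw [hD, div_le_div_iff₀ (by positivity) (by norm_num)]; nlinarith)]
          congr 1
          rw [hD]
          field_simp
        have e2 : pathFun q ((i:ℝ)/((Nx + Nx : ℕ):ℝ)) = pathFun px ((i:ℝ)/(Nx:ℝ)) := by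
          rw [pathFun_trans_left px seg (by rw [hD]; positivity)
            (by rw [hD, div_le_div_iff₀ (by positivity) (by norm_num)]; nlinarith)]
          congr 1
          rw [hD]
          field_simp
        simp only [hg2, if_pos hiN]
        rw [e1, e2]
      · set S : ℕ → ℂ := fun k => ψ (x + ((k:ℝ)/(Nx:ℝ)) • (y - x)) with hS
        have hterm : ∀ k ∈ Finset.range Nx,
            g2 (Nx + k) (pathFun q ((((Nx + k : ℕ):ℝ)+1)/((Nx + Nx : ℕ):ℝ))) -
              g2 (Nx + k) (pathFun q (((Nx + k : ℕ):ℝ)/((Nx + Nx : ℕ):ℝ))) = S (k+1) - S k := by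
          intro k hk
          have hkN : k < Nx := Finset.mem_range.mp hk
          have hnot : ¬ (Nx + k < Nx) := by omega
          have hk1 : (k:ℝ) + 1 ≤ (Nx:ℝ) := by exact_mod_cast hkN
          have hk0 : (0:ℝ) ≤ (k:ℝ) := by positivity
          have hcast : ((Nx + k : ℕ):ℝ) = (Nx:ℝ) + (k:ℝ) := by push_cast; ring
          have hA : pathFun q (((Nx + k : ℕ):ℝ)/((Nx + Nx : ℕ):ℝ))
              = x + ((k:ℝ)/(Nx:ℝ)) • (y - x) := by
            have ht1 : 1/2 ≤ ((Nx + k : ℕ):ℝ)/((Nx + Nx : ℕ):ℝ) := by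
              rw [hD, hcast, div_le_div_iff₀ (by norm_num) (by positivity)]
              nlinarith
            have ht2 : ((Nx + k : ℕ):ℝ)/((Nx + Nx : ℕ):ℝ) ≤ 1 := by
              rw [hD, hcast, div_le_one (by positivity)]
              nlinarith
            rw [pathFun_trans_right px seg ht1 ht2,
              hsegval _ ⟨by linarith, by linarith⟩]
            congr 2
            rw [hD, hcast]
            field_simp
            ring
          have hB : pathFun q ((((Nx + k : ℕ):ℝ)+1)/((Nx + Nx : ℕ):ℝ))
              = x + (((k:ℝ)+1)/(Nx:ℝ)) • (y - x) := by
            have ht1 : 1/2 ≤ (((Nx + k : ℕ):ℝ)+1)/((Nx + Nx : ℕ):ℝ) := by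
              rw [hD, hcast, div_le_div_iff₀ (by norm_num) (by positivity)]
              nlinarith
            have ht2 : (((Nx + k : ℕ):ℝ)+1)/((Nx + Nx : ℕ):ℝ) ≤ 1 := by
              rw [hD, hcast, div_le_one (by positivity)]
              nlinarith
            rw [pathFun_trans_right px seg ht1 ht2,
              hsegval _ ⟨by linarith, by linarith⟩]
            congr 2
            rw [hD, hcast]
            field_simp
            ring
          simp only [hg2, if_neg hnot]
          rw [hA, hB, hS]
          simp only []
          have hc2 : ((k+1:ℕ):ℝ) = (k:ℝ) + 1 := by push_cast; ring
          rw [hc2]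
        rw [Finset.sum_congr rfl hterm, Finset.sum_range_sub S]
        have e1 : S Nx = ψ y := by
          rw [hS]
          simp only []
          rw [div_self (ne_of_gt hNxpos), one_smul]
          congr 1
          abel
        have e2 : S 0 = ψ x := by
          rw [hS]
          simp
        rw [e1, e2]
    have hhom := chainSum_homotopy hU hω hclosed hHcont hHU hHz hHo
      (by omega : 0 < 2*Nx) hchain_q (hcpos y hyU) hchain_py
    rw [hH0, hH1, hval] at hhom
    have hΦy : Φ y = chainSum (pathFun py) (cN y hyU) (cf y hyU) := by
      rw [hΦ_def]
      simp only []
      rw [dif_pos hyU]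
    have hΦxv : Φ x = chainSum (pathFun px) Nx gx := by
      rw [hΦ_def]
      simp only []
      rw [dif_pos hx]
    rw [hΦy, hΦxv, ← hhom]
  have hΦx : HasFDerivAt (fun z => Φ x + (ψ z - ψ x)) (ω x) x :=
    ((hψ x (mem_ball_self hr)).sub_const (ψ x)).const_add (Φ x)
  apply hΦx.congr_of_eventuallyEq
  filter_upwards [isOpen_ball.mem_nhds (mem_ball_self hr)] with z hz
  exact key z hz
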